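/- Let $S,F,Q:W\to[0,\infty)$ be functionals on a normed space $W$, and let $(\lambda_n,u_n)$ be a sequence with: (i) $F(u_n)\ge \frac1d S(u_n) > 0$ and $-\lambda_n Q(u_n)\ge e F(u_n)>0$ for constants $d,e>0$; (ii) $F(u_n)\le C[S(u_n)^{\theta_1}Q(u_n)^{\tau_1}+S(u_n)^{\theta_2}Q(u_n)^{\tau_2}]$ with $C>0$, $\theta_i>1$, $\tau_i>0$; and (iii) $\lambda_n\to 0^-$ with $\lambda_n<0$. Then $Q(u_n)\to+\infty$. -/

import Mathlib

open Filter Topology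

private lemma term_bound {s f q r dd θ τ : ℝ} (hs : 0 ≤ s) (hf : 0 < f) (hq : 0 < q)
    (hr : 0 ≤ r) (hdd : 0 < dd) (hθ : 1 < θ) (hτ : 0 < τ)
    (hsf : s ≤ dd * f) (hfq : f ≤ r * q) :
    s ^ θ * q ^ τ ≤ f * (dd ^ θ * r ^ (θ - 1) * q ^ (θ - 1 + τ)) := by
  have hθ0 : (0:ℝ) ≤ θ := by linarith
  have hθ1 : (0:ℝ) ≤ θ - 1 := by linarith
  have h1 : s ^ θ ≤ (dd * f) ^ θ := Real.rpow_le_rpow hs hsf hθ0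
  have h2 : (dd * f) ^ θ = dd ^ θ * f ^ θ := Real.mul_rpow hdd.le hf.le
  have h3 : f ^ θ = f * f ^ (θ - 1) := by
    rw [← Real.rpow_one_add' hf.le (by linarith : 1 + (θ-1) ≠ 0)]
    ring_nf
  have h4 : f ^ (θ - 1) ≤ (r * q) ^ (θ - 1) := Real.rpow_le_rpow hf.le hfq hθ1
  have h5 : (r * q) ^ (θ - 1) = r ^ (θ - 1) * q ^ (θ - 1) := Real.mul_rpow hr hq.le
  have h6 : q ^ (θ - 1) * q ^ τ = q ^ (θ - 1 + τ) := (Real.rpow_add hq _ _).symm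
  have hqτ : 0 < q ^ τ := Real.rpow_pos_of_pos hq _
  have hdθ : 0 < dd ^ θ := Real.rpow_pos_of_pos hdd _
  calc s ^ θ * q ^ τ ≤ (dd * f) ^ θ * q ^ τ := by
        exact mul_le_mul_of_nonneg_right h1 hqτ.le
    _ = dd ^ θ * f * f ^ (θ - 1) * q ^ τ := by rw [h2, h3]; ring
    _ ≤ dd ^ θ * f * (r ^ (θ - 1) * q ^ (θ - 1)) * q ^ τ := by
        refine mul_le_mul_of_nonneg_right (mul_le_mul_of_nonneg_left ?_ ?_) hqτ.le
        · rw [← h5]; exact h4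
        · positivity
    _ = f * (dd ^ θ * r ^ (θ - 1) * (q ^ (θ - 1) * q ^ τ)) := by ring
    _ = f * (dd ^ θ * r ^ (θ - 1) * q ^ (θ - 1 + τ)) := by rw [h6]

theorem stmt5 {W : Type*} [NormedAddCommGroup W]
    (S F Q : W → ℝ) (hS : ∀ u, 0 ≤ S u) (hF : ∀ u, 0 ≤ F u) (hQ : ∀ u, 0 ≤ Q u)
    (lam : ℕ → ℝ) (u : ℕ → W)
    (d e C θ₁ θ₂ τ₁ τ₂ : ℝ) (hd : 0 < d) (he : 0 < e) (hC : 0 < C)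
    (hθ₁ : 1 < θ₁) (hθ₂ : 1 < θ₂) (hτ₁ : 0 < τ₁) (hτ₂ : 0 < τ₂)
    (h1 : ∀ n, (1/d) * S (u n) ≤ F (u n) ∧ 0 < S (u n))
    (h2 : ∀ n, e * F (u n) ≤ -(lam n) * Q (u n) ∧ 0 < F (u n))
    (h3 : ∀ n, F (u n) ≤ C * (S (u n) ^ θ₁ * Q (u n) ^ τ₁ + S (u n) ^ θ₂ * Q (u n) ^ τ₂))
    (h4 : ∀ n, lam n < 0) (h5 : Tendsto lam atTop (𝓝 0)) :
    Tendsto (fun n => Q (u n)) atTop atTop := by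
  have hqpos : ∀ n, 0 < Q (u n) := by
    intro n
    obtain ⟨h2a, h2b⟩ := h2 n
    rcases lt_or_eq_of_le (hQ (u n)) with h | h
    · exact h
    · exfalso
      have hl : 0 < -lam n := by linarith [h4 n]
      nlinarith
  -- key inequality
  have key : ∀ n, 1 ≤ C * (d ^ θ₁ * ((-lam n)/e) ^ (θ₁-1) * Q (u n) ^ (θ₁-1+τ₁)
      + d ^ θ₂ * ((-lam n)/e) ^ (θ₂-1) * Q (u n) ^ (θ₂-1+τ₂)) := by
    intro n
    obtain ⟨h1a, h1b⟩ := h1 n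
    obtain ⟨h2a, h2b⟩ := h2 n
    have hl : 0 < -lam n := by linarith [h4 n]
    have hsf : S (u n) ≤ d * F (u n) := by
      have := mul_le_mul_of_nonneg_left h1a hd.le
      rw [mul_comm (1/d)] at this
      calc S (u n) = d * (S (u n) * (1/d)) := by field_simp
        _ ≤ d * F (u n) := this
    have hfq : F (u n) ≤ ((-lam n)/e) * Q (u n) := by
      rw [div_mul_eq_mul_div, le_div_iff₀ he, mul_comm]
      linarith
    have hr : (0:ℝ) ≤ (-lam n)/e := le_of_lt (div_pos hl he)
    have t1 := term_bound (hS (u n)) h2b (hqpos n) hr hd hθ₁ hτ₁ hsf hfq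
    have t2 := term_bound (hS (u n)) h2b (hqpos n) hr hd hθ₂ hτ₂ hsf hfq
    have := h3 n
    have hchain : F (u n) ≤ F (u n) * (C * (d ^ θ₁ * ((-lam n)/e) ^ (θ₁-1) * Q (u n) ^ (θ₁-1+τ₁)
        + d ^ θ₂ * ((-lam n)/e) ^ (θ₂-1) * Q (u n) ^ (θ₂-1+τ₂))) := by
      calc F (u n) ≤ C * (S (u n) ^ θ₁ * Q (u n) ^ τ₁ + S (u n) ^ θ₂ * Q (u n) ^ τ₂) := this
        _ ≤ C * (F (u n) * (d ^ θ₁ * ((-lam n)/e) ^ (θ₁-1) * Q (u n) ^ (θ₁-1+τ₁))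
            + F (u n) * (d ^ θ₂ * ((-lam n)/e) ^ (θ₂-1) * Q (u n) ^ (θ₂-1+τ₂))) := by
          apply mul_le_mul_of_nonneg_left (add_le_add t1 t2) hC.le
        _ = F (u n) * (C * (d ^ θ₁ * ((-lam n)/e) ^ (θ₁-1) * Q (u n) ^ (θ₁-1+τ₁)
            + d ^ θ₂ * ((-lam n)/e) ^ (θ₂-1) * Q (u n) ^ (θ₂-1+τ₂))) := by ring
    nlinarith [h2b]
  rw [tendsto_atTop]
  intro M
  set M' : ℝ := max M 1 with hM'
  have hM'pos : 0 < M' := lt_of_lt_of_le one_pos (le_max_right _ _)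
  -- choose ε
  have hφcont : Tendsto (fun ε : ℝ => C * (d ^ θ₁ * (ε/e) ^ (θ₁-1) * M' ^ (θ₁-1+τ₁)
      + d ^ θ₂ * (ε/e) ^ (θ₂-1) * M' ^ (θ₂-1+τ₂))) (𝓝 0) (𝓝 0) := by
    have c1 : Tendsto (fun ε : ℝ => (ε/e) ^ (θ₁-1)) (𝓝 0) (𝓝 0) := by
      have : ContinuousAt (fun x : ℝ => x ^ (θ₁-1)) 0 :=
        Real.continuousAt_rpow_const 0 _ (Or.inr (by linarith))
      have h0 : (0:ℝ) ^ (θ₁-1) = 0 := Real.zero_rpow (by linarith)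
      have hdiv : Tendsto (fun ε:ℝ => ε/e) (𝓝 0) (𝓝 0) := by
        simpa using (tendsto_id.div_const e : Tendsto (fun ε:ℝ => ε/e) (𝓝 (0:ℝ)) (𝓝 (0/e)))
      have := this.tendsto.comp hdiv
      simpa [h0, Function.comp_def] using this
    have c2 : Tendsto (fun ε : ℝ => (ε/e) ^ (θ₂-1)) (𝓝 0) (𝓝 0) := by
      have : ContinuousAt (fun x : ℝ => x ^ (θ₂-1)) 0 :=
        Real.continuousAt_rpow_const 0 _ (Or.inr (by linarith))
      have h0 : (0:ℝ) ^ (θ₂-1) = 0 := Real.zero_rpow (by linarith)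
      have hdiv : Tendsto (fun ε:ℝ => ε/e) (𝓝 0) (𝓝 0) := by
        simpa using (tendsto_id.div_const e : Tendsto (fun ε:ℝ => ε/e) (𝓝 (0:ℝ)) (𝓝 (0/e)))
      have := this.tendsto.comp hdiv
      simpa [h0, Function.comp_def] using this
    have := ((c1.const_mul (d ^ θ₁)).mul_const (M' ^ (θ₁-1+τ₁))).add
      ((c2.const_mul (d ^ θ₂)).mul_const (M' ^ (θ₂-1+τ₂)))
    have := this.const_mul C
    simpa using this
  obtain ⟨ε, hε0, hφε⟩ : ∃ ε : ℝ, 0 < ε ∧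
      C * (d ^ θ₁ * (ε/e) ^ (θ₁-1) * M' ^ (θ₁-1+τ₁)
      + d ^ θ₂ * (ε/e) ^ (θ₂-1) * M' ^ (θ₂-1+τ₂)) < 1 := by
    have h1' : ∀ᶠ ε in 𝓝[>] (0:ℝ), C * (d ^ θ₁ * (ε/e) ^ (θ₁-1) * M' ^ (θ₁-1+τ₁)
        + d ^ θ₂ * (ε/e) ^ (θ₂-1) * M' ^ (θ₂-1+τ₂)) < 1 :=
      (hφcont.mono_left nhdsWithin_le_nhds).eventually_lt_const one_pos
    have h2' : ∀ᶠ ε in 𝓝[>] (0:ℝ), (0:ℝ) < ε := self_mem_nhdsWithin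
    obtain ⟨ε, hε1, hε2⟩ := (h2'.and h1').exists
    exact ⟨ε, hε1, hε2⟩
  have hlam : ∀ᶠ n in atTop, -lam n < ε := by
    have : Tendsto (fun n => -lam n) atTop (𝓝 0) := by simpa using h5.neg
    exact this.eventually_lt_const hε0
  filter_upwards [hlam] with n hn
  by_contra hcon
  push_neg at hcon
  have hQM : Q (u n) ≤ M' := le_trans hcon.le (le_max_left _ _)
  have hl : 0 < -lam n := by linarith [h4 n]
  have hmono : C * (d ^ θ₁ * ((-lam n)/e) ^ (θ₁-1) * Q (u n) ^ (θ₁-1+τ₁)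
      + d ^ θ₂ * ((-lam n)/e) ^ (θ₂-1) * Q (u n) ^ (θ₂-1+τ₂))
      ≤ C * (d ^ θ₁ * (ε/e) ^ (θ₁-1) * M' ^ (θ₁-1+τ₁)
      + d ^ θ₂ * (ε/e) ^ (θ₂-1) * M' ^ (θ₂-1+τ₂)) := by
    have hr1 : ((-lam n)/e) ^ (θ₁-1) ≤ (ε/e) ^ (θ₁-1) :=
      Real.rpow_le_rpow (div_nonneg hl.le he.le)
        (div_le_div_of_nonneg_right hn.le he.le) (by linarith)
    have hr2 : ((-lam n)/e) ^ (θ₂-1) ≤ (ε/e) ^ (θ₂-1) :=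
      Real.rpow_le_rpow (div_nonneg hl.le he.le)
        (div_le_div_of_nonneg_right hn.le he.le) (by linarith)
    have hq1 : Q (u n) ^ (θ₁-1+τ₁) ≤ M' ^ (θ₁-1+τ₁) :=
      Real.rpow_le_rpow (hQ _) hQM (by linarith)
    have hq2 : Q (u n) ^ (θ₂-1+τ₂) ≤ M' ^ (θ₂-1+τ₂) :=
      Real.rpow_le_rpow (hQ _) hQM (by linarith)
    have hdθ1 : (0:ℝ) ≤ d ^ θ₁ := (Real.rpow_pos_of_pos hd _).le
    have hdθ2 : (0:ℝ) ≤ d ^ θ₂ := (Real.rpow_pos_of_pos hd _).le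
    have hrnn1 : (0:ℝ) ≤ ((-lam n)/e) ^ (θ₁-1) := Real.rpow_nonneg (div_nonneg hl.le he.le) _
    have hrnn2 : (0:ℝ) ≤ ((-lam n)/e) ^ (θ₂-1) := Real.rpow_nonneg (div_nonneg hl.le he.le) _
    have hqnn1 : (0:ℝ) ≤ Q (u n) ^ (θ₁-1+τ₁) := Real.rpow_nonneg (hQ _) _
    have hqnn2 : (0:ℝ) ≤ Q (u n) ^ (θ₂-1+τ₂) := Real.rpow_nonneg (hQ _) _
    have hεnn1 : (0:ℝ) ≤ (ε/e) ^ (θ₁-1) := Real.rpow_nonneg (div_nonneg hε0.le he.le) _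
    have hεnn2 : (0:ℝ) ≤ (ε/e) ^ (θ₂-1) := Real.rpow_nonneg (div_nonneg hε0.le he.le) _
    apply mul_le_mul_of_nonneg_left _ hC.le
    apply add_le_add
    · apply mul_le_mul _ hq1 hqnn1 (by positivity)
      exact mul_le_mul_of_nonneg_left hr1 hdθ1
    · apply mul_le_mul _ hq2 hqnn2 (by positivity)
      exact mul_le_mul_of_nonneg_left hr2 hdθ2
  linarith [key n, hmono, hφε]
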